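/- Let V be a complex vector space, G a group, and ρ : G → GL_ℂ(V) a group homomorphism into the group of ℂ-linear automorphisms of V. Let σ, σ_c : G → G be group homomorphisms with σ∘σ_c = σ_c∘σ, and let θ : V → V be a ℂ-linear map satisfying θ(ρ(g)v) = ρ(σ(σ_c(g)))(θ(v)) for all g ∈ G and v ∈ V. Let h : V × V → ℂ be sesquilinear (ℂ-linear in the first argument, conjugate-linear in the second), positive definite (h(v,v) is a strictly positive real number for every v ≠ 0), and satisfy h(ρ(g)v, w) = h(v, ρ(σ_c(g))⁻¹ w) for all g ∈ G and v, w ∈ V. Let v₀ ∈ V be a nonzero vector with θ(v₀) = v₀. Then for every g ∈ G with σ(g) = g: h(ρ(g)v₀, θ(ρ(g)v₀)) = h(v₀, v₀), and consequently the ratio h(ρ(g)v₀, θ(ρ(g)v₀)) / h(ρ(g)v₀, ρ(g)v₀) is a strictly positive real number. -/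

import Mathlib

/-- In the setting of Statement 10, if moreover `h` is positive definite and
`v₀ ≠ 0` is a `θ`-fixed vector, then for every `σ`-fixed `g` one has
`h(ρ(g)v₀, θ(ρ(g)v₀)) = h(v₀, v₀)`, and the ratio
`h(ρ(g)v₀, θ(ρ(g)v₀)) / h(ρ(g)v₀, ρ(g)v₀)` is a strictly positive real number. -/
theorem statement_11 {V G : Type*} [AddCommGroup V] [Module ℂ V] [Group G]
    (ρ : G →* (V ≃ₗ[ℂ] V))
    (σ σc : G →* G) (hcomm : ∀ g : G, σ (σc g) = σc (σ g))
    (θ : V →ₗ[ℂ] V)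
    (hθ : ∀ (g : G) (v : V), θ (ρ g v) = ρ (σ (σc g)) (θ v))
    (h : V → V → ℂ)
    (hadd₁ : ∀ v v' w : V, h (v + v') w = h v w + h v' w)
    (hsmul₁ : ∀ (a : ℂ) (v w : V), h (a • v) w = a * h v w)
    (hadd₂ : ∀ v w w' : V, h v (w + w') = h v w + h v w')
    (hsmul₂ : ∀ (a : ℂ) (v w : V), h v (a • w) = (starRingEnd ℂ) a * h v w)
    (hpos : ∀ v : V, v ≠ 0 → (h v v).im = 0 ∧ 0 < (h v v).re)
    (hadj : ∀ (g : G) (v w : V), h (ρ g v) w = h v ((ρ (σc g))⁻¹ w))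
    (v₀ : V) (hv₀ : v₀ ≠ 0) (hθv₀ : θ v₀ = v₀) :
    ∀ g : G, σ g = g →
      h (ρ g v₀) (θ (ρ g v₀)) = h v₀ v₀ ∧
      ∃ r : ℝ, 0 < r ∧
        h (ρ g v₀) (θ (ρ g v₀)) / h (ρ g v₀) (ρ g v₀) = (r : ℂ) := by
  intro g hg
  have key : h (ρ g v₀) (θ (ρ g v₀)) = h v₀ v₀ := by
    rw [hθ, hθv₀, hcomm, hg, hadj]
    congr 1
    show (ρ (σc g))⁻¹ ((ρ (σc g)) v₀) = v₀
    exact (ρ (σc g)).symm_apply_apply v₀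
  refine ⟨key, ?_⟩
  have hne : ρ g v₀ ≠ 0 := by
    intro hz
    apply hv₀
    have := congrArg (⇑(ρ g).symm) hz
    simpa using this
  obtain ⟨him0, hre0⟩ := hpos v₀ hv₀
  obtain ⟨him1, hre1⟩ := hpos (ρ g v₀) hne
  refine ⟨(h v₀ v₀).re / (h (ρ g v₀) (ρ g v₀)).re, div_pos hre0 hre1, ?_⟩
  rw [key]
  rw [← Complex.re_add_im (h v₀ v₀), ← Complex.re_add_im (h (ρ g v₀) (ρ g v₀)),
    him0, him1]
  push_cast
  simp [div_div_div_cancel_right₀]
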